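/- Let λ > 0, n ≥ 1, u_1 < u_2 < … < u_n real numbers and μ_1, …, μ_n > 0. For i ∈ {1,…,n} set P̄_i = (1/√λ)·((√λ+μ_i, μ_i e^{−2√λ u_i}), (−μ_i e^{2√λ u_i}, √λ−μ_i)) and Q̄_i = (μ_i/√λ)·((e^{−√λ u_i}, 0), (−e^{√λ u_i}, 0)). Define R̄_0 = I, R̄_i = P̄_i ⋯ P̄_1, S̄_0 = 0, S̄_i = (1/λ)·Σ_{j=1}^{i} P̄_i ⋯ P̄_{j+1} Q̄_j, and, assuming the first entry of R̄_n C_0 is nonzero, γ̄_0 = (first entry of S̄_n C_0)/(first entry of R̄_n C_0) and B̄_i = S̄_i C_0 − γ̄_0 R̄_i C_0, where C_0 = (1,0)ᵀ. Then for every i ∈ {1,…,n}, (1,0)·N(u_i)·B̄_i = (1,0)·N(u_i)·B̄_{i−1}, where (1,0)·N(u_i) is the first row (e^{√λ u_i}, e^{−√λ u_i}) of N(u_i). -/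

import Mathlib

open Matrix Real

/-- The fundamental matrix `N(x)` associated with parameter `λ`:
`N(x) = ((e^{√λ x}, e^{−√λ x}), (√λ e^{√λ x}, −√λ e^{−√λ x}))`.
The matrix `M(x)` of the paper is `Nmat (λ+μ) x`. -/
noncomputable def Nmat (lam x : ℝ) : Matrix (Fin 2) (Fin 2) ℝ :=
  !![Real.exp (Real.sqrt lam * x), Real.exp (-(Real.sqrt lam * x));
     Real.sqrt lam * Real.exp (Real.sqrt lam * x),
       -(Real.sqrt lam * Real.exp (-(Real.sqrt lam * x)))]

/-- `Rprod P i = P i * P (i-1) * ⋯ * P 1`, with `Rprod P 0 = 1`. -/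
noncomputable def Rprod (P : ℕ → Matrix (Fin 2) (Fin 2) ℝ) : ℕ → Matrix (Fin 2) (Fin 2) ℝ
  | 0 => 1
  | i + 1 => P (i + 1) * Rprod P i

/-- `Sbar P Q lam i = (1/λ) Σ_{j=1}^{i} P i * ⋯ * P (j+1) * Q j`, with value `0` at `0`. -/
noncomputable def Sbar (P Q : ℕ → Matrix (Fin 2) (Fin 2) ℝ) (lam : ℝ) :
    ℕ → Matrix (Fin 2) (Fin 2) ℝ
  | 0 => 0
  | i + 1 => (1 / lam) • Q (i + 1) + P (i + 1) * Sbar P Q lam i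

/-- with the local-time matrices `P̄ᵢ, Q̄ᵢ` at points `u₁ < … < uₙ`,
the vectors `B̄ᵢ = S̄ᵢC₀ − γ̄₀R̄ᵢC₀` satisfy `(1,0)N(uᵢ)B̄ᵢ = (1,0)N(uᵢ)B̄ᵢ₋₁` for each
`i ∈ {1,…,n}`. -/
theorem statement15 (lam : ℝ) (hlam : 0 < lam) (n : ℕ) (hn : 1 ≤ n)
    (u μ : ℕ → ℝ)
    (hu : ∀ i j, 1 ≤ i → i < j → j ≤ n → u i < u j)
    (hμ : ∀ i, 1 ≤ i → i ≤ n → 0 < μ i)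
    (P Q : ℕ → Matrix (Fin 2) (Fin 2) ℝ)
    (hP : ∀ i, P i = (1 / Real.sqrt lam) •
      !![Real.sqrt lam + μ i, μ i * Real.exp (-(2 * (Real.sqrt lam * u i)));
         -(μ i * Real.exp (2 * (Real.sqrt lam * u i))), Real.sqrt lam - μ i])
    (hQ : ∀ i, Q i = (μ i / Real.sqrt lam) •
      !![Real.exp (-(Real.sqrt lam * u i)), 0;
         -(Real.exp (Real.sqrt lam * u i)), 0])
    (hden : ((Rprod P n).mulVec ![1, 0]) 0 ≠ 0)
    (γ₀ : ℝ)
    (hγ₀ : γ₀ = ((Sbar P Q lam n).mulVec ![1, 0]) 0 / ((Rprod P n).mulVec ![1, 0]) 0)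
    (Bbar : ℕ → Fin 2 → ℝ)
    (hB : ∀ i, Bbar i =
      (Sbar P Q lam i).mulVec ![1, 0] - γ₀ • (Rprod P i).mulVec ![1, 0]) :
    ∀ i, 1 ≤ i → i ≤ n →
      dotProduct (Matrix.vecMul ![1, 0] (Nmat lam (u i))) (Bbar i) =
        dotProduct (Matrix.vecMul ![1, 0] (Nmat lam (u i))) (Bbar (i - 1)) := by
  intro i hi _
  obtain ⟨k, rfl⟩ : ∃ k, i = k + 1 := ⟨i - 1, (Nat.succ_pred_eq_of_pos hi).symm⟩
  have hs : (0:ℝ) < Real.sqrt lam := Real.sqrt_pos.2 hlam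
  have hs0 : Real.sqrt lam ≠ 0 := hs.ne'
  have hl0 : lam ≠ 0 := hlam.ne'
  set s := Real.sqrt lam with hsdef
  set x := (Sbar P Q lam k).mulVec ![1, 0] with hx
  set y := (Rprod P k).mulVec ![1, 0] with hy
  have hB1 := hB (k+1)
  have hB0 := hB k
  rw [Nat.add_sub_cancel, hB1, hB0]
  simp only [Sbar, Rprod, Matrix.add_mulVec, Matrix.smul_mulVec,
    ← Matrix.mulVec_mulVec, ← hx, ← hy, hP, hQ, Nmat]
  simp [Matrix.mulVec, Matrix.vecMul, dotProduct, Fin.sum_univ_two,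
    Real.exp_neg, ← Real.exp_nat_mul, two_mul, Real.exp_add, Pi.smul_apply,
    Function.comp, Matrix.vecHead, Matrix.vecTail, smul_eq_mul]
  field_simp
  rw [← hsdef]
  ring
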